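/- Let R be a DGA over A, F a DG right R-module, C_• and D_• free graded A-modules with finite bases B and B′ (all degrees ≥ 0), m^C and m^D twisting cocycles for (R, C_•) and (R, D_•), and (ν_{x,y}) a continuation cocycle from m^C to m^D. Then the degree-0 A-linear map Ψ^F : C_*(C_•, F) → C_*(D_•, F) defined on the twisted complexes by Ψ^F(α⊗x) = Σ_{y∈B′} (α·ν_{x,y}) ⊗ y is a chain map. -/

import Mathlib

/-- Given twisting cocycles `mC`, `mD` for `(R, C)` and `(R, D)`, a continuation
cocycle `ν` from `mC` to `mD`, and a DG right `R`-module `F`, the degree `0` map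
`Ψ (α ⊗ x) = ∑ y (α · ν x y) ⊗ y` between the twisted complexes is a chain map. -/
theorem statement3
    {A : Type*} [CommRing A] {R : Type*} [Ring R] [Algebra A R]
    (ℛ : ℤ → Submodule A R) [GradedRing ℛ]
    (d : R →ₗ[A] R)
    (hd_mem : ∀ i : ℤ, ∀ a ∈ ℛ i, d a ∈ ℛ (i - 1))
    (hd_sq : ∀ a : R, d (d a) = 0)
    (hd_leibniz : ∀ i : ℤ, ∀ a ∈ ℛ i, ∀ b : R,
      d (a * b) = d a * b + (Int.negOnePow i : ℤ) • (a * d b))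
    {F : Type*} [AddCommGroup F] [Module A F]
    (ℱ : ℤ → Submodule A F) [DirectSum.Decomposition ℱ]
    (dF : F →ₗ[A] F)
    (hdF_mem : ∀ i : ℤ, ∀ f ∈ ℱ i, dF f ∈ ℱ (i - 1))
    (hdF_sq : ∀ f : F, dF (dF f) = 0)
    (act : F →ₗ[A] R →ₗ[A] F)
    (hact_one : ∀ f : F, act f 1 = f)
    (hact_mul : ∀ (f : F) (a b : R), act (act f a) b = act f (a * b))
    (hact_mem : ∀ (i j : ℤ), ∀ f ∈ ℱ i, ∀ a ∈ ℛ j, act f a ∈ ℱ (i + j))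
    (hact_leibniz : ∀ i : ℤ, ∀ f ∈ ℱ i, ∀ a : R,
      dF (act f a) = act (dF f) a + (Int.negOnePow i : ℤ) • act f (d a))
    {B : Type*} [Fintype B] [DecidableEq B]
    (degB : B → ℤ) (hdegB : ∀ x : B, 0 ≤ degB x)
    {B' : Type*} [Fintype B'] [DecidableEq B']
    (degB' : B' → ℤ) (hdegB' : ∀ y : B', 0 ≤ degB' y)
    (mC : B → B → R)
    (hmC_mem : ∀ x y : B, mC x y ∈ ℛ (degB x - degB y - 1))
    (hmC_zero : ∀ x y : B, ¬ degB y < degB x → mC x y = 0)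
    (hmC_mc : ∀ x y : B, d (mC x y) =
      ∑ z : B, (Int.negOnePow (degB x - degB z) : ℤ) • (mC x z * mC z y))
    (mD : B' → B' → R)
    (hmD_mem : ∀ w y : B', mD w y ∈ ℛ (degB' w - degB' y - 1))
    (hmD_zero : ∀ w y : B', ¬ degB' y < degB' w → mD w y = 0)
    (hmD_mc : ∀ w y : B', d (mD w y) =
      ∑ u : B', (Int.negOnePow (degB' w - degB' u) : ℤ) • (mD w u * mD u y))
    (ν : B → B' → R)
    (hν_mem : ∀ (x : B) (y : B'), ν x y ∈ ℛ (degB x - degB' y))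
    (hν_eq : ∀ (x : B) (y : B'), d (ν x y) =
      (∑ z : B, mC x z * ν z y) -
        ∑ w : B', (Int.negOnePow (degB x - degB' w) : ℤ) • (ν x w * mD w y))
    (DC : (B → F) →ₗ[A] (B → F))
    (hDC : ∀ i : ℤ, ∀ f ∈ ℱ i, ∀ x : B,
      DC (Pi.single x f) = Pi.single x (dF f) +
        (Int.negOnePow i : ℤ) • (fun z : B => act f (mC x z)))
    (DD : (B' → F) →ₗ[A] (B' → F))
    (hDD : ∀ i : ℤ, ∀ f ∈ ℱ i, ∀ w : B',
      DD (Pi.single w f) = Pi.single w (dF f) +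
        (Int.negOnePow i : ℤ) • (fun y : B' => act f (mD w y)))
    (Ψ : (B → F) →ₗ[A] (B' → F))
    (hΨ : ∀ (f : F) (x : B), Ψ (Pi.single x f) = fun y : B' => act f (ν x y)) :
    DD ∘ₗ Ψ = Ψ ∘ₗ DC := by

  classical
  have key : ∀ (x : B) (i : ℤ) (f : F), f ∈ ℱ i →
      DD (Ψ (Pi.single x f)) = Ψ (DC (Pi.single x f)) := by
    intro x i f hf
    -- rewrite LHS
    rw [hΨ f x]
    have e2 : (fun y : B' => act f (ν x y)) = ∑ y : B', Pi.single y (act f (ν x y)) :=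
      (Finset.univ_sum_single _).symm
    rw [e2, map_sum]
    -- rewrite RHS
    rw [hDC i f hf x, map_add, map_zsmul, hΨ (dF f) x]
    have e1 : (fun z : B => act f (mC x z)) = ∑ z : B, Pi.single z (act f (mC x z)) :=
      (Finset.univ_sum_single _).symm
    rw [e1, map_sum]
    -- expand DD on each single
    have hterm : ∀ y : B', DD (Pi.single y (act f (ν x y))) =
        Pi.single y (dF (act f (ν x y))) +
          (Int.negOnePow (i + (degB x - degB' y)) : ℤ) •
            (fun u : B' => act (act f (ν x y)) (mD y u)) := fun y =>
      hDD _ _ (hact_mem _ _ f hf _ (hν_mem x y)) y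
    simp only [hterm, hΨ]
    funext u
    simp only [Finset.sum_apply, Pi.add_apply, Pi.smul_apply, Finset.sum_add_distrib,
      Finset.sum_pi_single, Finset.mem_univ, if_pos, hact_mul]
    -- now an equation in F
    have hL : dF (act f (ν x u)) = act (dF f) (ν x u) +
        (Int.negOnePow i : ℤ) • act f (d (ν x u)) := hact_leibniz i f hf _
    have c1 : (Int.negOnePow i : ℤ) • act f (d (ν x u)) =
        (∑ z : B, (Int.negOnePow i : ℤ) • act f (mC x z * ν z u)) -
          ∑ w : B', (Int.negOnePow (i + (degB x - degB' w)) : ℤ) • act f (ν x w * mD w u) := by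
      rw [hν_eq, map_sub, map_sum, map_sum, smul_sub, Finset.smul_sum, Finset.smul_sum]
      congr 1
      refine Finset.sum_congr rfl fun w _ => ?_
      rw [map_zsmul, smul_smul, ← Units.val_mul, ← Int.negOnePow_add]
    rw [hL, c1, Finset.smul_sum]
    abel
  refine LinearMap.ext fun g => ?_
  simp only [LinearMap.comp_apply]
  conv_lhs => rw [← Finset.univ_sum_single g]
  conv_rhs => rw [← Finset.univ_sum_single g]
  simp only [map_sum]
  refine Finset.sum_congr rfl fun x _ => ?_
  induction (g x) using DirectSum.Decomposition.inductionOn ℱ with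
  | zero => simp
  | add f f' hf hf' =>
    have : (Pi.single x (f + f') : B → F) = Pi.single x f + Pi.single x f' := by
      simp [Pi.single_add]
    rw [this, map_add, map_add, map_add, map_add, hf, hf']
  | homogeneous m => exact key x _ m.1 m.2
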